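/- Let α, β, γ₀ ∈ ℂ, q(z) = z³ + α z² + β z + γ₀, and let R₀ > 0 be such that all zeros of q lie in the open disk |z| < R₀. Suppose g is holomorphic on {z ∈ ℂ : |z| > R₀} and satisfies g(z)² = q(z)/z there, with g(z)/z → 1 as |z| → ∞. Then for every R > R₀, the contour integral of g over the circle |z| = R (traversed counterclockwise) equals −(πi/4)·(α² − 4β). -/

import Mathlib

open Complex

/-- If `g` is a holomorphic square root of `q(z)/z` outside a disk containing all the zeros
of the monic cubic `q`, with `g(z)/z → 1` at infinity, then the contour integral of `g`
over any circle `|z| = R` (with `R > R₀`, counterclockwise) equals `-(πi/4)(α² - 4β)`. -/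
theorem stmt_3 (α β γ₀ : ℂ) (R₀ : ℝ) (hR₀ : 0 < R₀)
    (hzeros : ∀ z : ℂ, z ^ 3 + α * z ^ 2 + β * z + γ₀ = 0 → ‖z‖ < R₀)
    (g : ℂ → ℂ)
    (hg : DifferentiableOn ℂ g {z : ℂ | R₀ < ‖z‖})
    (hsq : ∀ z : ℂ, R₀ < ‖z‖ →
      g z ^ 2 = (z ^ 3 + α * z ^ 2 + β * z + γ₀) / z)
    (hasymp : Filter.Tendsto (fun z : ℂ => g z / z)
      (Filter.comap (fun z : ℂ => ‖z‖) Filter.atTop) (nhds 1)) :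
    ∀ R : ℝ, R₀ < R →
      (∫ θ in (0 : ℝ)..(2 * Real.pi),
          g (R * Complex.exp (θ * Complex.I)) * (Complex.I * R * Complex.exp (θ * Complex.I)))
        = -(Real.pi * Complex.I / 4) * (α ^ 2 - 4 * β) := by
  intro R hR
  have hopen : IsOpen {z : ℂ | R₀ < ‖z‖} :=
    isOpen_lt continuous_const continuous_norm
  have hgAt : ∀ z : ℂ, R₀ < ‖z‖ → DifferentiableAt ℂ g z := fun z hz =>
    hg.differentiableAt (hopen.mem_nhds hz)
  set F : ℂ → ℂ := fun z => g z - (z + α / 2) with hFdef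
  set c₁ : ℂ := (β - α ^ 2 / 4) / 2 with hc₁
  set l := Filter.comap (fun z : ℂ => ‖z‖) Filter.atTop with hl
  have hFAt : ∀ z : ℂ, R₀ < ‖z‖ → DifferentiableAt ℂ F z := fun z hz =>
    (hgAt z hz).sub (differentiableAt_id.add_const _)
  have hFcont : ContinuousOn F {z : ℂ | R₀ < ‖z‖} := fun z hz =>
    ((hFAt z hz).continuousAt).continuousWithinAt
  have hne : ∀ z : ℂ, R₀ < ‖z‖ → z ≠ 0 := by
    intro z hz h
    rw [h] at hz
    simp at hz
    linarith
  -- key algebraic identity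
  have key : ∀ z : ℂ, R₀ < ‖z‖ →
      F z * (g z + (z + α / 2)) = (β - α ^ 2 / 4) + γ₀ * z⁻¹ := by
    intro z hz
    have hz0 : z ≠ 0 := hne z hz
    have h1 : F z * (g z + (z + α / 2)) = g z ^ 2 - (z + α / 2) ^ 2 := by
      simp only [hFdef]; ring
    rw [h1, hsq z hz]
    field_simp
    ring
  -- z⁻¹ → 0 along l
  have habs : Filter.Tendsto (fun z : ℂ => ‖z‖) l Filter.atTop := Filter.tendsto_comap
  have hinv : Filter.Tendsto (fun z : ℂ => z⁻¹) l (nhds 0) := by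
    rw [tendsto_zero_iff_norm_tendsto_zero]
    have := tendsto_inv_atTop_zero.comp habs
    simp only [norm_inv]; exact this
  have hbig : ∀ᶠ z : ℂ in l, R₀ < ‖z‖ :=
    habs.eventually (Filter.eventually_gt_atTop R₀)
  -- (g z + (z + α/2))/z → 2
  have h2 : Filter.Tendsto (fun z : ℂ => (g z + (z + α / 2)) / z) l (nhds 2) := by
    have h2' : Filter.Tendsto (fun z : ℂ => g z / z + (1 + (α / 2) * z⁻¹)) l
        (nhds (1 + (1 + (α / 2) * 0))) :=
      hasymp.add (tendsto_const_nhds.add (tendsto_const_nhds.mul hinv))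
    have : (1 : ℂ) + (1 + (α / 2) * 0) = 2 := by ring
    rw [this] at h2'
    refine h2'.congr' ?_
    filter_upwards [hbig] with z hz
    have hz0 : z ≠ 0 := hne z hz
    field_simp
  -- z * F z → c₁
  have h3 : Filter.Tendsto (fun z : ℂ => z * F z) l (nhds c₁) := by
    have hnum : Filter.Tendsto (fun z : ℂ => (β - α ^ 2 / 4) + γ₀ * z⁻¹) l
        (nhds ((β - α ^ 2 / 4) + γ₀ * 0)) :=
      tendsto_const_nhds.add (tendsto_const_nhds.mul hinv)
    have hdiv : Filter.Tendsto
        (fun z : ℂ => ((β - α ^ 2 / 4) + γ₀ * z⁻¹) / ((g z + (z + α / 2)) / z)) l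
        (nhds (((β - α ^ 2 / 4) + γ₀ * 0) / 2)) := hnum.div h2 two_ne_zero
    have hval : ((β - α ^ 2 / 4) + γ₀ * 0) / 2 = c₁ := by rw [hc₁]; ring
    rw [hval] at hdiv
    refine hdiv.congr' ?_
    have hD : ∀ᶠ z : ℂ in l, (g z + (z + α / 2)) / z ≠ 0 :=
      h2.eventually_ne two_ne_zero
    filter_upwards [hbig, hD] with z hz hDz
    have hz0 : z ≠ 0 := hne z hz
    rw [div_eq_iff hDz, ← key z hz]
    field_simp
  -- circle integrability
  have hsph : ∀ r : ℝ, R₀ < r → Metric.sphere (0 : ℂ) r ⊆ {z : ℂ | R₀ < ‖z‖} := by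
    intro r hr z hzmem
    have : ‖z‖ = r := by simpa using hzmem
    simpa [this] using hr
  have hIntF : ∀ r : ℝ, R₀ < r → CircleIntegrable F 0 r := fun r hr =>
    ContinuousOn.circleIntegrable (by linarith) (hFcont.mono (hsph r hr))
  have hIntg : ∀ r : ℝ, R₀ < r → CircleIntegrable g 0 r := fun r hr =>
    ContinuousOn.circleIntegrable (by linarith)
      ((hg.continuousOn).mono (hsph r hr))
  have hIntInv : ∀ r : ℝ, R₀ < r → CircleIntegrable (fun z : ℂ => c₁ * z⁻¹) 0 r := by
    intro r hr
    refine ContinuousOn.circleIntegrable (by linarith) ?_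
    refine continuousOn_const.mul (ContinuousOn.inv₀ continuousOn_id ?_)
    intro z hz
    have habsz : ‖z‖ = r := by simpa using hz
    exact hne z (by rw [habsz]; exact hr)
  -- constancy of ∮ F in r
  have hconst : ∀ r : ℝ, R ≤ r →
      (∮ z in C((0 : ℂ), r), F z) = ∮ z in C((0 : ℂ), R), F z := by
    intro r hrR
    refine circleIntegral_eq_of_differentiable_on_annulus_off_countable (by linarith) hrR
      Set.countable_empty ?_ ?_
    · refine hFcont.mono ?_
      intro z hz
      have h1 : R ≤ ‖z‖ := by
        have := hz.2
        simp only [Metric.mem_ball, Complex.dist_eq, sub_zero, not_lt] at this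
        simpa using this
      simp only [Set.mem_setOf_eq]; linarith
    · intro z hz
      refine hFAt z ?_
      have := hz.1.2
      simp only [Metric.mem_closedBall, Complex.dist_eq, sub_zero, not_le] at this
      have : R < ‖z‖ := by simpa using this
      linarith
  -- limit of ∮ F as r → ∞
  have hlim : Filter.Tendsto (fun r : ℝ => ∮ z in C((0 : ℂ), r), F z) Filter.atTop
      (nhds (2 * Real.pi * Complex.I * c₁)) := by
    rw [Metric.tendsto_atTop]
    intro ε hε
    have hε' : (0 : ℝ) < ε / (4 * Real.pi) := by positivity
    have hev : ∀ᶠ z : ℂ in l, dist (z * F z) c₁ < ε / (4 * Real.pi) :=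
      Metric.tendsto_nhds.mp h3 _ hε'
    rw [hl, Filter.eventually_comap] at hev
    rw [Filter.eventually_atTop] at hev
    obtain ⟨M, hM⟩ := hev
    refine ⟨max M (R₀ + 1), ?_⟩
    intro r hr
    have hrM : M ≤ r := le_trans (le_max_left _ _) hr
    have hrR₀ : R₀ < r := by
      have := le_trans (le_max_right _ _) hr; linarith
    have hr0 : (0 : ℝ) < r := by linarith
    -- compute ∮ c₁ z⁻¹
    have hIinv : (∮ z in C((0 : ℂ), r), c₁ * z⁻¹) = c₁ * (2 * Real.pi * Complex.I) := by
      have h0 : (0 : ℂ) ∈ Metric.ball (0 : ℂ) r := by simpa using hr0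
      have := circleIntegral.integral_sub_inv_of_mem_ball h0
      simp only [sub_zero] at this
      rw [circleIntegral.integral_const_mul, this]
    have hsub : (∮ z in C((0 : ℂ), r), (F z - c₁ * z⁻¹))
        = (∮ z in C((0 : ℂ), r), F z) - c₁ * (2 * Real.pi * Complex.I) := by
      rw [circleIntegral.integral_sub (hIntF r hrR₀) (hIntInv r hrR₀), hIinv]
    have hbound : ∀ z ∈ Metric.sphere (0 : ℂ) r, ‖F z - c₁ * z⁻¹‖ ≤ (ε / (4 * Real.pi)) / r := by
      intro z hzmem
      have habsz : ‖z‖ = r := by simpa using hzmem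
      have hzR₀ : R₀ < ‖z‖ := by rw [habsz]; exact hrR₀
      have hz0 : z ≠ 0 := hne z hzR₀
      have heq : F z - c₁ * z⁻¹ = (z * F z - c₁) * z⁻¹ := by field_simp
      rw [heq, norm_mul, norm_inv]
      have h1 : ‖z * F z - c₁‖ < ε / (4 * Real.pi) := by
        have := hM (‖z‖) (by rw [habsz]; exact hrM) z rfl
        rwa [dist_eq_norm] at this
      have h2 : ‖z‖ = r := by rw [habsz]
      rw [h2]
      rw [div_eq_mul_inv]
      exact mul_le_mul_of_nonneg_right h1.le (by positivity)
    have hnorm := circleIntegral.norm_integral_le_of_norm_le_const hr0.le hbound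
    have hval : 2 * Real.pi * r * ((ε / (4 * Real.pi)) / r) = ε / 2 := by
      field_simp
      ring
    rw [hval] at hnorm
    rw [hsub] at hnorm
    have hfinal : dist (∮ z in C((0 : ℂ), r), F z) (2 * Real.pi * Complex.I * c₁) ≤ ε / 2 := by
      rw [dist_eq_norm]
      have : (∮ z in C((0 : ℂ), r), F z) - 2 * Real.pi * Complex.I * c₁
          = (∮ z in C((0 : ℂ), r), F z) - c₁ * (2 * Real.pi * Complex.I) := by ring
      rw [this]
      exact hnorm
    linarith
  -- combine: the constant value equals the limit
  have hFval : (∮ z in C((0 : ℂ), R), F z) = 2 * Real.pi * Complex.I * c₁ := by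
    have hconst' : Filter.Tendsto (fun r : ℝ => ∮ z in C((0 : ℂ), r), F z) Filter.atTop
        (nhds (∮ z in C((0 : ℂ), R), F z)) := by
      refine Filter.Tendsto.congr' ?_ tendsto_const_nhds
      filter_upwards [Filter.eventually_ge_atTop R] with r hr
      exact (hconst r hr).symm
    exact tendsto_nhds_unique hconst' hlim
  -- ∮ (z + α/2) = 0
  have hpoly : (∮ z in C((0 : ℂ), R), (z + α / 2)) = 0 := by
    refine circleIntegral_eq_zero_of_differentiable_on_off_countable (by linarith)
      Set.countable_empty ?_ ?_
    · exact (continuous_id.add continuous_const).continuousOn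
    · intro z _
      exact differentiableAt_id.add_const _
  have hIntPoly : CircleIntegrable (fun z : ℂ => z + α / 2) 0 R :=
    ContinuousOn.circleIntegrable (by linarith)
      (continuous_id.add continuous_const).continuousOn
  have hgval : (∮ z in C((0 : ℂ), R), g z) = 2 * Real.pi * Complex.I * c₁ := by
    have : (∮ z in C((0 : ℂ), R), F z)
        = (∮ z in C((0 : ℂ), R), g z) - ∮ z in C((0 : ℂ), R), (z + α / 2) :=
      circleIntegral.integral_sub (hIntg R hR) hIntPoly
    rw [hpoly, sub_zero] at this
    rw [← this, hFval]
  -- convert the θ-integral to the circle integral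
  have hLHS : (∫ θ in (0 : ℝ)..(2 * Real.pi),
      g (R * Complex.exp (θ * Complex.I)) * (Complex.I * R * Complex.exp (θ * Complex.I)))
      = ∮ z in C((0 : ℂ), R), g z := by
    rw [circleIntegral]
    refine intervalIntegral.integral_congr ?_
    intro θ _
    simp only [deriv_circleMap, circleMap, smul_eq_mul, zero_add]
    ring
  rw [hLHS, hgval, hc₁]
  ring
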